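/- Let S be a completely regular semigroup, ρ a stable quasiorder on S, and s, t ∈ S J-equivalent. Then s ρ t if and only if s⁰ ρ t⁰ and t⁻¹·s ρ (t⁻¹·s)⁰. -/
import Mathlib

/-- `JBelow s t` : s lies in the two-sided ideal generated by t. -/
def JBelow {S : Type*} [Semigroup S] (s t : S) : Prop :=
  s = t ∨ (∃ a, s = a * t) ∨ (∃ b, s = t * b) ∨ (∃ a b, s = a * t * b)

/-- `JEquiv s t` : s and t generate the same two-sided ideal. -/
def JEquiv {S : Type*} [Semigroup S] (s t : S) : Prop :=
  JBelow s t ∧ JBelow t s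

namespace TKaux
variable {S : Type*} [Semigroup S] (inv : S → S)
  (hinv1 : ∀ x, x * inv x * x = x)
  (hinv2 : ∀ x, inv (inv x) = x)
  (hinv3 : ∀ x, x * inv x = inv x * x)

/-- normalized J-below -/
def LeJ {S : Type*} [Semigroup S] (x y : S) : Prop := ∃ a b, x = a * y * b

include hinv1 hinv3 in
lemma h0r : ∀ x : S, x * (x * inv x) = x := by
  intro x; rw [hinv3, ← mul_assoc, hinv1]

include hinv1 hinv3 in
lemma h0r' : ∀ x : S, x * (inv x * x) = x := by
  intro x; rw [← hinv3, h0r inv hinv1 hinv3]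

include hinv1 hinv2 in
lemma hii : ∀ x : S, inv x * x * inv x = inv x := by
  intro x; have := hinv1 (inv x); rwa [hinv2] at this

lemma leJ_trans {x y z : S} (h1 : LeJ x y) (h2 : LeJ y z) : LeJ x z := by
  obtain ⟨a, b, h1⟩ := h1
  obtain ⟨c, d, h2⟩ := h2
  exact ⟨a * c, d * b, by rw [h1, h2]; simp only [mul_assoc]⟩

include hinv1 hinv3 in
lemma jbelow_norm {x y : S} (h : JBelow x y) : LeJ x y := by
  rcases h with h | ⟨a, h⟩ | ⟨b, h⟩ | ⟨a, b, h⟩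
  · exact ⟨y * inv y, inv y * y, by rw [hinv1, h0r' inv hinv1 hinv3]; exact h⟩
  · exact ⟨a, inv y * y, by rw [mul_assoc, h0r' inv hinv1 hinv3]; exact h⟩
  · exact ⟨y * inv y, b, by rw [hinv1]; exact h⟩
  · exact ⟨a, b, h⟩

include hinv1 hinv3 in
lemma leJ_sq : ∀ x : S, LeJ x (x * x) := by
  intro x
  refine ⟨inv x, inv x * x, ?_⟩
  calc x = x * (inv x * x) := (h0r' inv hinv1 hinv3 x).symm
    _ = (x * inv x * x) * (inv x * x) := by rw [hinv1]
    _ = ((inv x * x) * x) * (inv x * x) := by rw [hinv3]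
    _ = inv x * (x * x) * (inv x * x) := by simp only [mul_assoc]

include hinv1 hinv3 in
lemma leJ_swap : ∀ x y : S, LeJ (x * y) (y * x) := by
  intro x y
  obtain ⟨a, b, h⟩ := leJ_sq inv hinv1 hinv3 (x * y)
  exact ⟨a * x, y * b, by rw [h]; simp only [mul_assoc]⟩

include hinv1 hinv3 in
lemma leJ_meet {z x y : S} (hx : LeJ z x) (hy : LeJ z y) : LeJ z (x * y) := by
  obtain ⟨a, b, h1⟩ := hx
  obtain ⟨c, d, h2⟩ := hy
  have step1 : LeJ z (x * ((b * c) * y)) := by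
    obtain ⟨p, q, h5⟩ := leJ_sq inv hinv1 hinv3 z
    have h5' : z = p * ((a * x * b) * (c * y * d)) * q := by
      rw [← h1, ← h2]; exact h5
    exact ⟨p * a, d * q, by rw [h5']; simp only [mul_assoc]⟩
  have step2 : LeJ (x * ((b * c) * y)) (y * (x * (b * c))) := by
    have := leJ_swap inv hinv1 hinv3 (x * (b * c)) y
    simpa only [mul_assoc] using this
  have step3 : LeJ (y * (x * (b * c))) (y * x) := by
    refine ⟨y * inv y, b * c, ?_⟩
    simp only [← mul_assoc, hinv1]
  exact leJ_trans (leJ_trans (leJ_trans step1 step2) step3)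
    (leJ_swap inv hinv1 hinv3 y x)

end TKaux

/-- For a stable quasiorder ρ on a completely regular semigroup and J-equivalent
elements s, t: s ρ t iff s⁰ ρ t⁰ and t⁻¹s ρ (t⁻¹s)⁰, where a⁰ = a·a⁻¹. -/
theorem trace_kernel_characterization_left
    {S : Type*} [Semigroup S] (inv : S → S)
    (hinv1 : ∀ x, x * inv x * x = x)
    (hinv2 : ∀ x, inv (inv x) = x)
    (hinv3 : ∀ x, x * inv x = inv x * x)
    (ρ : S → S → Prop)
    (hrefl : ∀ a, ρ a a)
    (htrans : ∀ a b c, ρ a b → ρ b c → ρ a c)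
    (hmul_left : ∀ a b c, ρ a b → ρ (c * a) (c * b))
    (hmul_right : ∀ a b c, ρ a b → ρ (a * c) (b * c))
    (hinv_stable : ∀ a b, ρ a b → ρ (inv a) (inv b))
    (s t : S) (hJ : JEquiv s t) :
    ρ s t ↔ (ρ (s * inv s) (t * inv t) ∧
      ρ (inv t * s) ((inv t * s) * inv (inv t * s))) := by
  obtain ⟨hJst, hJts⟩ := hJ
  have h0r := TKaux.h0r inv hinv1 hinv3
  have h0r' := TKaux.h0r' inv hinv1 hinv3
  have hii := TKaux.hii inv hinv1 hinv2
  -- (t*inv t)*(inv t*s) = inv t*s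
  have t0u : (t * inv t) * (inv t * s) = inv t * s := by
    rw [← mul_assoc, hinv3, hii]
  constructor
  · intro hst
    have hA : ρ (s * inv s) (t * inv t) :=
      htrans _ _ _ (hmul_right _ _ (inv s) hst) (hmul_left _ _ t (hinv_stable _ _ hst))
    refine ⟨hA, ?_⟩
    have h4 : ρ (inv t * s) (t * inv t) := by
      have := hmul_left _ _ (inv t) hst
      rwa [← hinv3] at this
    have h5 : ρ ((inv t * s) * ((inv t * s) * inv (inv t * s)))
        ((t * inv t) * ((inv t * s) * inv (inv t * s))) :=
      hmul_right _ _ _ h4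
    rwa [h0r, ← mul_assoc, t0u] at h5
  · rintro ⟨hA, hB⟩
    -- J-theoretic part:  ((inv t*s) * inv (inv t*s)) * t = t
    have hLt_tinv : TKaux.LeJ t (inv t) := ⟨t, t, (hinv1 t).symm⟩
    have hLts : TKaux.LeJ t s := TKaux.jbelow_norm inv hinv1 hinv3 hJts
    have hLt_u : TKaux.LeJ t (inv t * s) :=
      TKaux.leJ_meet inv hinv1 hinv3 hLt_tinv hLts
    have hLtinv_u : TKaux.LeJ (inv t) (inv t * s) :=
      TKaux.leJ_trans ⟨inv t, inv t, (hii t).symm⟩ hLt_u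
    obtain ⟨a, b, hab⟩ := hLtinv_u
    have hab' : inv t = a * inv t * (s * b) := by
      conv_lhs => rw [hab]
      simp only [mul_assoc]
    have hq : inv t * ((s * b) * inv (s * b)) = inv t := by
      conv_lhs => rw [hab']
      rw [mul_assoc (a * inv t), h0r]
      exact hab'.symm
    have hz : inv t = (inv t * s) * (b * inv (s * b)) := by
      conv_lhs => rw [← hq]
      simp only [mul_assoc]
    have u0tinv : ((inv t * s) * inv (inv t * s)) * inv t = inv t := by
      nth_rewrite 3 [hz]
      rw [← mul_assoc, hinv1]
      exact hz.symm
    have u0t : ((inv t * s) * inv (inv t * s)) * t = t := by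
      have ht : (inv t * t) * t = t := by rw [← hinv3, hinv1]
      nth_rewrite 3 [← ht]
      rw [← mul_assoc, ← mul_assoc, u0tinv]
      exact ht
    have I2 : (t * ((inv t * s) * inv (inv t * s))) * (t * inv t) = t := by
      calc (t * ((inv t * s) * inv (inv t * s))) * (t * inv t)
          = t * ((((inv t * s) * inv (inv t * s)) * t) * inv t) := by
            simp only [mul_assoc]
        _ = t * (t * inv t) := by rw [u0t]
        _ = t := h0r t
    have I1 : (t * ((inv t * s) * inv (inv t * s))) * (s * inv s)
        = t * ((inv t * s) * inv (inv t * s)) := by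
      rw [hinv3 (inv t * s)]
      simp only [mul_assoc]
      rw [h0r]
    have c1' : ρ s (t * (inv t * s)) := by
      have := hmul_right _ _ s hA
      rwa [hinv1, mul_assoc] at this
    have c2 : ρ (t * (inv t * s))
        (t * ((inv t * s) * inv (inv t * s))) := hmul_left _ _ t hB
    have c3 := hmul_left _ _ (t * ((inv t * s) * inv (inv t * s))) hA
    rw [I1, I2] at c3
    exact htrans _ _ _ (htrans _ _ _ c1' c2) c3
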